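/- If a topological space X is semi-stratifiable over some ordinal α (linearly semi-stratifiable), then X is a D-space. -/

import Mathlib

open Set TopologicalSpace

/-- `X` is a D-space: for every open neighborhood assignment `N` there is a
closed discrete subset `D` with `⋃ d ∈ D, N d = univ`. -/
def IsDSpace (X : Type*) [TopologicalSpace X] : Prop :=
  ∀ N : X → Set X, (∀ x, IsOpen (N x)) → (∀ x, x ∈ N x) →
    ∃ D : Set X, IsClosed D ∧ DiscreteTopology D ∧ (⋃ d ∈ D, N d) = Set.univ

/-- `X` is semi-stratifiable over the ordinal `α`: there is a map `F` assigning
to each `β < α` and each open `U` a closed set `F β U` such that the sets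
`F β U` for `β < α` cover `U`, `F` is monotone in `U`, and increasing in `β`. -/
def SemiStratifiableOver (X : Type*) [TopologicalSpace X] (α : Ordinal) : Prop :=
  ∃ F : Ordinal → Set X → Set X,
    (∀ β < α, ∀ U : Set X, IsOpen U → IsClosed (F β U)) ∧
    (∀ U : Set X, IsOpen U → U = ⋃ β ∈ Set.Iio α, F β U) ∧
    (∀ U W : Set X, IsOpen U → IsOpen W → U ⊆ W → ∀ β < α, F β U ⊆ F β W) ∧
    (∀ U : Set X, IsOpen U → ∀ γ β : Ordinal, γ < β → β < α → F γ U ⊆ F β U)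

section DSpaceAux

universe u v

variable {X : Type u} [TopologicalSpace X]

set_option linter.unusedSectionVars false

/-- The rank of a point `x`: the least `β` with `x ∈ F β (N x)`. -/
noncomputable def dsRank (α : Ordinal.{v}) (F : Ordinal.{v} → Set X → Set X) (N : X → Set X)
    (hne : ∀ x : X, {β : Ordinal.{v} | β < α ∧ x ∈ F β (N x)}.Nonempty) (x : X) : Ordinal.{v} :=
  Ordinal.lt_wf.min {β : Ordinal.{v} | β < α ∧ x ∈ F β (N x)} (hne x)

theorem dsRank_mem (α : Ordinal.{v}) (F : Ordinal.{v} → Set X → Set X) (N : X → Set X)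
    (hne : ∀ x : X, {β : Ordinal.{v} | β < α ∧ x ∈ F β (N x)}.Nonempty) (x : X) :
    dsRank α F N hne x < α ∧ x ∈ F (dsRank α F N hne x) (N x) :=
  Ordinal.lt_wf.min_mem {β : Ordinal.{v} | β < α ∧ x ∈ F β (N x)} (hne x)

/-- A key combining the rank (primary) with a fixed well-order on `X` (secondary). -/
noncomputable def dsKey (α : Ordinal.{v}) (F : Ordinal.{v} → Set X → Set X) (N : X → Set X)
    (hne : ∀ x : X, {β : Ordinal.{v} | β < α ∧ x ∈ F β (N x)}.Nonempty) (x : X) :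
    Ordinal.{max u v} :=
  (Ordinal.lift.{v} (Ordinal.type (@WellOrderingRel X)) + 1)
      * Ordinal.lift.{u} (dsRank α F N hne x)
    + Ordinal.lift.{v} (Ordinal.typein (@WellOrderingRel X) x)

theorem dsKey_lt (α : Ordinal.{v}) (F : Ordinal.{v} → Set X → Set X) (N : X → Set X)
    (hne : ∀ x : X, {β : Ordinal.{v} | β < α ∧ x ∈ F β (N x)}.Nonempty) {x y : X}
    (h : dsRank α F N hne x < dsRank α F N hne y) : dsKey α F N hne x < dsKey α F N hne y := by
  have h1 : Ordinal.lift.{v} (Ordinal.typein (@WellOrderingRel X) x)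
      < Ordinal.lift.{v} (Ordinal.type (@WellOrderingRel X)) + 1 :=
    lt_of_lt_of_le (Ordinal.lift_lt.2 (Ordinal.typein_lt_type _ x)) (le_self_add (b := 1))
  calc (Ordinal.lift.{v} (Ordinal.type (@WellOrderingRel X)) + 1)
        * Ordinal.lift.{u} (dsRank α F N hne x)
        + Ordinal.lift.{v} (Ordinal.typein (@WellOrderingRel X) x)
      < (Ordinal.lift.{v} (Ordinal.type (@WellOrderingRel X)) + 1)
        * Ordinal.lift.{u} (dsRank α F N hne x)
        + (Ordinal.lift.{v} (Ordinal.type (@WellOrderingRel X)) + 1) := add_lt_add_right h1 _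
    _ = (Ordinal.lift.{v} (Ordinal.type (@WellOrderingRel X)) + 1)
        * Order.succ (Ordinal.lift.{u} (dsRank α F N hne x)) := (Ordinal.mul_succ _ _).symm
    _ ≤ (Ordinal.lift.{v} (Ordinal.type (@WellOrderingRel X)) + 1)
        * Ordinal.lift.{u} (dsRank α F N hne y) :=
        mul_le_mul_right (Order.succ_le_of_lt (Ordinal.lift_lt.2 h)) _
    _ ≤ dsKey α F N hne y := le_self_add

theorem dsRank_le_of_key_lt (α : Ordinal.{v}) (F : Ordinal.{v} → Set X → Set X) (N : X → Set X)
    (hne : ∀ x : X, {β : Ordinal.{v} | β < α ∧ x ∈ F β (N x)}.Nonempty) {x y : X}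
    (h : dsKey α F N hne x < dsKey α F N hne y) : dsRank α F N hne x ≤ dsRank α F N hne y := by
  by_contra hc
  exact absurd (dsKey_lt α F N hne (not_le.1 hc)) (asymm h)

theorem dsKey_injective (α : Ordinal.{v}) (F : Ordinal.{v} → Set X → Set X) (N : X → Set X)
    (hne : ∀ x : X, {β : Ordinal.{v} | β < α ∧ x ∈ F β (N x)}.Nonempty) {x y : X}
    (h : dsKey α F N hne x = dsKey α F N hne y) : x = y := by
  have hr : dsRank α F N hne x = dsRank α F N hne y := by
    rcases lt_trichotomy (dsRank α F N hne x) (dsRank α F N hne y) with h1 | h1 | h1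
    · exact absurd h (dsKey_lt α F N hne h1).ne
    · exact h1
    · exact absurd h.symm (dsKey_lt α F N hne h1).ne
  unfold dsKey at h
  rw [hr, add_right_inj, Ordinal.lift_inj] at h
  exact Ordinal.typein_injective _ h

theorem dsWF (α : Ordinal.{v}) (F : Ordinal.{v} → Set X → Set X) (N : X → Set X)
    (hne : ∀ x : X, {β : Ordinal.{v} | β < α ∧ x ∈ F β (N x)}.Nonempty) :
    WellFounded (fun a b : X => dsKey α F N hne a < dsKey α F N hne b) :=
  InvImage.wf _ Ordinal.lt_wf

/-- The greedily selected set: `x` is selected iff it is not covered by the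
neighborhood of any previously selected point. -/
noncomputable def dsP (α : Ordinal.{v}) (F : Ordinal.{v} → Set X → Set X) (N : X → Set X)
    (hne : ∀ x : X, {β : Ordinal.{v} | β < α ∧ x ∈ F β (N x)}.Nonempty) : X → Prop :=
  (dsWF α F N hne).fix
    (fun x IH => ∀ y (hy : dsKey α F N hne y < dsKey α F N hne x), IH y hy → x ∉ N y)

theorem dsP_iff (α : Ordinal.{v}) (F : Ordinal.{v} → Set X → Set X) (N : X → Set X)
    (hne : ∀ x : X, {β : Ordinal.{v} | β < α ∧ x ∈ F β (N x)}.Nonempty) (x : X) :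
    dsP α F N hne x ↔
      ∀ y, dsKey α F N hne y < dsKey α F N hne x → dsP α F N hne y → x ∉ N y := by
  unfold dsP
  rw [WellFounded.fix_eq]

theorem dsRank_min (α : Ordinal.{v}) (F : Ordinal.{v} → Set X → Set X) (N : X → Set X)
    (hne : ∀ x : X, {β : Ordinal.{v} | β < α ∧ x ∈ F β (N x)}.Nonempty) (x : X)
    {β : Ordinal.{v}} (hβ : β < α) (hx : x ∈ F β (N x)) : dsRank α F N hne x ≤ β :=
  not_lt.1 (Ordinal.lt_wf.not_lt_min {β : Ordinal.{v} | β < α ∧ x ∈ F β (N x)} (x := β) ⟨hβ, hx⟩)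

end DSpaceAux

/-- If a T1 space `X` is semi-stratifiable over some ordinal `α` (linearly
semi-stratifiable), then `X` is a D-space. -/
theorem linearlySemiStratifiable_isDSpace (X : Type*) [TopologicalSpace X] [T1Space X]
    (h : ∃ α : Ordinal, SemiStratifiableOver X α) : IsDSpace X := by
  obtain ⟨α, F, hcl, hcov, hmU, hmβ⟩ := h
  intro N hNo hNm
  -- every point has a rank
  have hne : ∀ x : X, {β : Ordinal | β < α ∧ x ∈ F β (N x)}.Nonempty := by
    intro x
    have hx : x ∈ ⋃ β ∈ Set.Iio α, F β (N x) := by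
      rw [← hcov (N x) (hNo x)]; exact hNm x
    simp only [mem_iUnion, Set.mem_Iio, exists_prop] at hx
    obtain ⟨β, hβ, hxβ⟩ := hx
    exact ⟨β, hβ, hxβ⟩
  set r := dsRank α F N hne with hr_def
  set key := dsKey α F N hne with hkey_def
  set P := dsP α F N hne with hP_def
  have hP : ∀ x, P x ↔ ∀ y, key y < key x → P y → x ∉ N y :=
    fun x => dsP_iff α F N hne x
  -- every point is covered by `N d` for some selected `d`
  have hcover' : ∀ z : X, ∃ d, P d ∧ z ∈ N d := by
    intro z
    by_cases hz : P z
    · exact ⟨z, hz, hNm z⟩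
    · rw [hP z] at hz
      push_neg at hz
      obtain ⟨y, _, hPy, hzy⟩ := hz
      exact ⟨y, hPy, hzy⟩
  -- the key separation lemma
  have hkeylem : ∀ z : X, ∃ d, P d ∧ z ∈ N d ∧
      ∃ V : Set X, IsOpen V ∧ z ∈ V ∧ ∀ e, P e → e ∈ V → e = d := by
    intro z
    have hS : {d : X | P d ∧ z ∈ N d}.Nonempty := hcover' z
    set d := (dsWF α F N hne).min {d : X | P d ∧ z ∈ N d} hS with hd_def
    have hdS : P d ∧ z ∈ N d := (dsWF α F N hne).min_mem _ hS
    have hdmin : ∀ e, P e → z ∈ N e → ¬ key e < key d := fun e h1 h2 =>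
      (dsWF α F N hne).not_lt_min {d : X | P d ∧ z ∈ N d} (x := e) ⟨h1, h2⟩
    -- the union of neighborhoods of earlier selected points
    set W := ⋃ (e : X) (_ : P e ∧ key e < key d), N e with hW_def
    have hWo : IsOpen W := isOpen_iUnion fun e => isOpen_iUnion fun _ => hNo e
    have hzW : z ∉ W := by
      intro hz
      rw [hW_def] at hz
      simp only [mem_iUnion] at hz
      obtain ⟨e, ⟨hPe, hlt⟩, hze⟩ := hz
      exact hdmin e hPe hze hlt
    have hβ : r d < α := (dsRank_mem α F N hne d).1
    have hFWsub : F (r d) W ⊆ W := by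
      intro w hw
      rw [hcov W hWo]
      exact mem_biUnion hβ hw
    have hFWcl : IsClosed (F (r d) W) := hcl (r d) hβ W hWo
    have hin : ∀ e, P e → key e < key d → e ∈ F (r d) W := by
      intro e hPe hlt
      have h1 : e ∈ F (r e) (N e) := (dsRank_mem α F N hne e).2
      have hre : r e ≤ r d := dsRank_le_of_key_lt α F N hne hlt
      have hNeW : N e ⊆ W := by
        intro w hw
        rw [hW_def]
        exact mem_iUnion.2 ⟨e, mem_iUnion.2 ⟨⟨hPe, hlt⟩, hw⟩⟩
      have h2 : e ∈ F (r d) (N e) := by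
        rcases hre.lt_or_eq with h3 | h3
        · exact hmβ (N e) (hNo e) (r e) (r d) h3 hβ h1
        · rwa [h3] at h1
      exact hmU (N e) W (hNo e) hWo hNeW (r d) hβ h2
    refine ⟨d, hdS.1, hdS.2, N d \ F (r d) W, (hNo d).sdiff hFWcl,
      ⟨hdS.2, fun hc => hzW (hFWsub hc)⟩, ?_⟩
    intro e hPe ⟨heNd, heF⟩
    rcases lt_trichotomy (key e) (key d) with hlt | heq | hgt
    · exact absurd (hin e hPe hlt) heF
    · exact dsKey_injective α F N hne heq
    · exact absurd heNd ((hP e).1 hPe d hgt hdS.1)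
  refine ⟨{x | P x}, ?_, ?_, ?_⟩
  · -- closed
    rw [← isOpen_compl_iff]
    rw [isOpen_iff_forall_mem_open]
    intro z hz
    obtain ⟨d, hPd, _, V, hVo, hzV, hVe⟩ := hkeylem z
    have hzd : z ≠ d := fun h => hz (by rw [h]; exact hPd)
    refine ⟨V \ {d}, ?_, hVo.sdiff isClosed_singleton, ⟨hzV, hzd⟩⟩
    rintro e ⟨heV, hed⟩ hPe
    exact hed (hVe e hPe heV)
  · -- discrete
    rw [discreteTopology_iff_isOpen_singleton]
    rintro ⟨d, hd⟩
    obtain ⟨d', hPd', _, V, hVo, hdV, hVe⟩ := hkeylem d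
    have hdd' : d = d' := hVe d hd hdV
    have : {(⟨d, hd⟩ : {x | P x})} = (Subtype.val : {x | P x} → X) ⁻¹' V := by
      ext ⟨e, he⟩
      simp only [Set.mem_singleton_iff, Set.mem_preimage, Subtype.mk.injEq]
      constructor
      · rintro rfl; exact hdV
      · intro heV
        rw [hVe e he heV, ← hdd']
    rw [this]
    exact hVo.preimage continuous_subtype_val
  · -- cover
    apply Set.eq_univ_of_forall
    intro z
    obtain ⟨d, hPd, hzd⟩ := hcover' z
    exact mem_biUnion hPd hzd
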